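/- Let F be a properly parametrized Markov multi-map with forward trajectory space X (with left-shift map T) and associated SFT Σ_M. If (X,T) is topologically mixing, then Σ_M satisfies the Mixing Condition (MC). -/

import Mathlib

open Set Topology

/-! ### Generic dynamical notions -/

/-- Topological transitivity of a map. -/
def TopTransitive {α : Type*} [TopologicalSpace α] (T : α → α) : Prop :=
  ∀ U V : Set α, IsOpen U → IsOpen V → U.Nonempty → V.Nonempty →
    ∃ n : ℕ, (T^[n] '' U ∩ V).Nonempty

/-- Topological mixing of a map. -/
def TopMixing {α : Type*} [TopologicalSpace α] (T : α → α) : Prop :=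
  ∀ U V : Set α, IsOpen U → IsOpen V → U.Nonempty → V.Nonempty →
    ∃ N : ℕ, ∀ n, N ≤ n → (T^[n] '' U ∩ V).Nonempty

/-- Density of the set of periodic points of a map. -/
def DensePeriodic {α : Type*} [TopologicalSpace α] (T : α → α) : Prop :=
  Dense {x : α | ∃ p : ℕ, 1 ≤ p ∧ T^[p] x = x}

/-- The metric `d(x,y) = sup_k |x_k - y_k|/(k+1)` on sequence spaces. -/
noncomputable def dseq (x y : ℕ → ℝ) : ℝ := ⨆ k : ℕ, |x k - y k| / ((k : ℝ) + 1)

/-- The specification property for a map `T` with respect to a distance function `d`. -/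
def SpecProp {α : Type*} (T : α → α) (d : α → α → ℝ) : Prop :=
  ∀ ε : ℝ, 0 < ε → ∃ N : ℕ, ∀ l : ℕ, ∀ x : Fin (l + 1) → α, ∀ a b : Fin (l + 1) → ℕ,
    (∀ k, 1 ≤ a k) → (∀ k, a k ≤ b k) →
    (∀ k : Fin l, b k.castSucc < a k.succ ∧ b k.castSucc + N ≤ a k.succ) →
    ∀ p : ℕ, b (Fin.last l) + N ≤ p →
      ∃ z : α, T^[p] z = z ∧
        ∀ k : Fin (l + 1), ∀ i : ℕ, a k ≤ i → i ≤ b k → d (T^[i] z) (T^[i] (x k)) < ε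

/-- The length `ℓ` of a (possibly degenerate) interval. -/
noncomputable def intervalLen (I : Set ℝ) : ℝ := sSup I - sInf I

/-! ### Markov multi-maps -/

/-- A Markov multi-map of the interval, given by a tuple
`(P, A₀, A₁, A₂, D, R, {f_a})` as in the paper, together with the derived data
(inverse maps `g`, interiors `D0`, `R0`, graphs `Gr`, `G0`) which are uniquely
determined by the defining equations below. -/
structure MarkovMultiMap where
  A : Type
  finA : Finite A
  A0 : Set A
  A1 : Set A
  A2 : Set A
  P : Finset ℝ
  D : A → Set ℝ
  R : A → Set ℝ
  f : A → ℝ → ℝ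
  g : A → ℝ → ℝ
  D0 : A → Set ℝ
  R0 : A → Set ℝ
  Gr : A → Set (ℝ × ℝ)
  G0 : A → Set (ℝ × ℝ)
  P_zero : (0 : ℝ) ∈ P
  P_one : (1 : ℝ) ∈ P
  P_sub : (P : Set ℝ) ⊆ Set.Icc 0 1
  A_cover : ∀ a : A, a ∈ A0 ∨ a ∈ A1 ∨ a ∈ A2
  A01 : A0 ∩ A1 = ∅
  A02 : A0 ∩ A2 = ∅
  A12 : A1 ∩ A2 = ∅
  D_A0 : ∀ a ∈ A0, ∃ p ∈ P, ∃ q ∈ P, p < q ∧ (∀ r ∈ P, ¬(p < r ∧ r < q)) ∧ D a = Set.Icc p q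
  D_A12 : ∀ a ∈ A1 ∪ A2, ∃ p ∈ P, D a = {p}
  R_A0 : ∀ a ∈ A0, ∃ u ∈ P, ∃ v ∈ P, u < v ∧ R a = Set.Icc u v
  R_A1 : ∀ a ∈ A1, ∃ u ∈ P, ∃ v ∈ P, u < v ∧ R a = Set.Icc u v ∧
    Set.Icc u v ∩ (P : Set ℝ) = {u, v}
  R_A2 : ∀ a ∈ A2, ∃ u ∈ P, R a = {u}
  f_homeo : ∀ a ∈ A0, ContinuousOn (f a) (D a) ∧ Set.BijOn (f a) (D a) (R a)
  g_A0 : ∀ a ∈ A0, (∀ x ∈ D a, g a (f a x) = x) ∧ ∀ y ∈ R a, g a y ∈ D a ∧ f a (g a y) = y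
  g_A12 : ∀ a ∈ A1 ∪ A2, ∀ y ∈ R a, g a y ∈ D a
  cover : Set.Icc (0 : ℝ) 1 = ⋃ a : A, D a
  D0_A0 : ∀ a ∈ A0, D0 a = interior (D a)
  D0_A12 : ∀ a ∈ A1 ∪ A2, D0 a = D a
  R0_A01 : ∀ a ∈ A0 ∪ A1, R0 a = interior (R a)
  R0_A2 : ∀ a ∈ A2, R0 a = R a
  Gr_A0 : ∀ a ∈ A0, Gr a = {q : ℝ × ℝ | q.1 ∈ D a ∧ q.2 = f a q.1}
  Gr_A12 : ∀ a ∈ A1 ∪ A2, Gr a = (D a) ×ˢ (R a)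
  G0_A0 : ∀ a ∈ A0, G0 a = {q : ℝ × ℝ | q.1 ∈ D0 a ∧ q.2 = f a q.1}
  G0_A1 : ∀ a ∈ A1, G0 a = (D a) ×ˢ (R0 a)
  G0_A2 : ∀ a ∈ A2, G0 a = Gr a

namespace MarkovMultiMap

variable (M : MarkovMultiMap)

/-- The graph `G(F)` of the multi-map. -/
def GF : Set (ℝ × ℝ) := ⋃ a : M.A, M.Gr a

/-- `F` is properly parametrized: the sets `G₀(a)` partition `G(F)`. -/
def ProperlyParametrized : Prop :=
  (⋃ a : M.A, M.G0 a) = M.GF ∧ ∀ a b : M.A, a ≠ b → Disjoint (M.G0 a) (M.G0 b)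

/-- The forward trajectory space `X`. -/
def X : Set (ℕ → ℝ) :=
  {x | (∀ k, x k ∈ Set.Icc (0 : ℝ) 1) ∧ ∀ k, (x k, x (k + 1)) ∈ M.GF}

/-- The left-shift map `T` on the forward trajectory space. -/
def shift : M.X → M.X :=
  fun x => ⟨fun k => x.1 (k + 1), ⟨fun k => x.2.1 (k + 1), fun k => x.2.2 (k + 1)⟩⟩

/-- The inverse trajectory (inverse limit) space `Y`, encoded by `y k = y_{-k}`. -/
def Y : Set (ℕ → ℝ) :=
  {y | (∀ k, y k ∈ Set.Icc (0 : ℝ) 1) ∧ ∀ k, (y (k + 1), y k) ∈ M.GF}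

/-- The right-shift map `S` on the inverse limit space (in the encoding `y k = y_{-k}`). -/
def ishift : M.Y → M.Y :=
  fun y => ⟨fun k => y.1 (k + 1), ⟨fun k => y.2.1 (k + 1), fun k => y.2.2 (k + 1)⟩⟩

/-- The space `X_n` of finite trajectories of length `n`. -/
def finTraj (n : ℕ) : Set (Fin n → ℝ) :=
  {x | (∀ i, x i ∈ Set.Icc (0 : ℝ) 1) ∧
    ∀ i : Fin n, ∀ h : (i : ℕ) + 1 < n, (x i, x ⟨(i : ℕ) + 1, h⟩) ∈ M.GF}

/-- The associated nearest-neighbor SFT `Σ_M`. -/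
def SFT : Set (ℕ → M.A) := {a | ∀ n : ℕ, M.D0 (a (n + 1)) ⊆ M.R0 (a n)}

/-- The word `u` (of length `n`) occurs in some point of `Z`. -/
def WordIn {n : ℕ} (u : Fin n → M.A) (Z : Set (ℕ → M.A)) : Prop :=
  ∃ z ∈ Z, ∃ m : ℕ, ∀ i : Fin n, u i = z (m + (i : ℕ))

/-- `L_n`, the words of length `n` in the language of `Σ_M`. -/
def Lang (n : ℕ) : Set (Fin n → M.A) := {u | M.WordIn u M.SFT}

/-- `(x,u)` is a labeled finite trajectory: `(x_k, x_{k+1}) ∈ G(u_k)` for all `k`. -/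
def Labeled {n : ℕ} (x : Fin (n + 1) → ℝ) (u : Fin n → M.A) : Prop :=
  ∀ i : Fin n, (x i.castSucc, x i.succ) ∈ M.Gr (u i)

/-- `(x,u)` is a special labeled finite trajectory: `(x_k, x_{k+1}) ∈ G₀(u_k)` for all `k`. -/
def SpecialLabeled {n : ℕ} (x : Fin (n + 1) → ℝ) (u : Fin n → M.A) : Prop :=
  ∀ i : Fin n, (x i.castSucc, x i.succ) ∈ M.G0 (u i)

/-- A word `u ∈ L_n` is essential if the set of finite trajectories specially labeled
by `u` is open in `X_{n+1}`. -/
def EssentialWord {n : ℕ} (u : Fin n → M.A) : Prop :=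
  u ∈ M.Lang n ∧ IsOpen {x : M.finTraj (n + 1) | M.SpecialLabeled x.1 u}

/-- A symbol is essential if it appears in some essential word. -/
def EssentialSymbol (a : M.A) : Prop :=
  ∃ n : ℕ, ∃ u : Fin n → M.A, M.EssentialWord u ∧ ∃ i : Fin n, u i = a

/-- `A^(e)`, the set of essential symbols. -/
def Ess : Set M.A := {a | M.EssentialSymbol a}

/-- `E`, the set of essential symbolic sequences. -/
def E : Set (ℕ → M.A) := {z ∈ M.SFT | ∀ i : ℕ, z i ∈ M.Ess}

/-- A word all of whose letters lie in `C`, in the language of `Σ_M`. -/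
def WordOver {n : ℕ} (u : Fin n → M.A) (C : Set M.A) : Prop :=
  u ∈ M.Lang n ∧ ∀ i, u i ∈ C

/-- There is a word of length `n+1` over `C` beginning with `a` and ending with `b`. -/
def WordFromTo (C : Set M.A) (a b : M.A) (n : ℕ) : Prop :=
  ∃ u : Fin (n + 1) → M.A, M.WordOver u C ∧ u 0 = a ∧ u (Fin.last n) = b

/-- `C ⊆ A` is irreducible. -/
def IrreducibleSet (C : Set M.A) : Prop :=
  ∀ a ∈ C, ∀ b ∈ C, ∃ n : ℕ, M.WordFromTo C a b n

/-- `C` is an irreducible component (a maximal irreducible subset of `A`). -/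
def IrreducibleComponent (C : Set M.A) : Prop :=
  M.IrreducibleSet C ∧ ∀ C' : Set M.A, M.IrreducibleSet C' → C ⊆ C' → C' = C

/-- `C ⊆ A` is mixing. -/
def MixingSet (C : Set M.A) : Prop :=
  ∃ N : ℕ, 1 ≤ N ∧ ∀ a ∈ C, ∀ b ∈ C, ∀ n : ℕ, N ≤ n + 1 → M.WordFromTo C a b n

/-- `C` is a mixing component (a maximal mixing subset of `A`). -/
def MixingComponent (C : Set M.A) : Prop :=
  M.MixingSet C ∧ ∀ C' : Set M.A, M.MixingSet C' → C ⊆ C' → C' = C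

/-- The Irreducibility Condition (IC). -/
def IC : Prop := ∃ C : Set M.A, M.IrreducibleComponent C ∧ M.Ess ⊆ C

/-- The Mixing Condition (MC). -/
def MC : Prop := ∃ C : Set M.A, M.MixingComponent C ∧ M.Ess ⊆ C

/-- `Z` is a subshift of `Σ_M`: shift-invariant and closed in the product of discrete
topologies (closedness phrased combinatorially). -/
def IsSubshift (Z : Set (ℕ → M.A)) : Prop :=
  Z ⊆ M.SFT ∧ (∀ z ∈ Z, (fun k => z (k + 1)) ∈ Z) ∧
  ∀ x : ℕ → M.A, (∀ n : ℕ, ∃ z ∈ Z, ∀ i, i < n → z i = x i) → x ∈ Z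

/-- The symbol `a` occurs in some point of `Z`. -/
def SymbolInShift (Z : Set (ℕ → M.A)) (a : M.A) : Prop := ∃ z ∈ Z, ∃ k : ℕ, z k = a

/-- `Z` is transitive on symbols. -/
def TransitiveOnSymbols (Z : Set (ℕ → M.A)) : Prop :=
  ∀ a b : M.A, M.SymbolInShift Z a → M.SymbolInShift Z b →
    ∃ z ∈ Z, ∃ m n : ℕ, z m = a ∧ z (m + n) = b

end MarkovMultiMap

/-- The composition `g_{u₀} ∘ ⋯ ∘ g_{u_n}` of inverse maps along a list of symbols. -/
def gWordList (M : MarkovMultiMap) : List M.A → ℝ → ℝ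
  | [], x => x
  | a :: l, x => M.g a (gWordList M l x)

namespace MarkovMultiMap

/-- The inverse map `g_u` associated to a word `u = u₀⋯u_n`. -/
def gWord (M : MarkovMultiMap) {n : ℕ} (u : Fin (n + 1) → M.A) : ℝ → ℝ :=
  gWordList M (List.ofFn u)

/-- The interval `I_u = g_u(R(u_n))`. -/
def Iword (M : MarkovMultiMap) {n : ℕ} (u : Fin (n + 1) → M.A) : Set ℝ :=
  M.gWord u '' M.R (u (Fin.last n))

/-- The Coding Condition (CC). -/
def CC (M : MarkovMultiMap) : Prop :=
  ∃ Z : Set (ℕ → M.A), M.IsSubshift Z ∧ M.TransitiveOnSymbols Z ∧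
    (∀ y ∈ Set.Icc (0 : ℝ) 1, ∃ a ∈ Z, ∃ x ∈ M.X, x 0 = y ∧
      ∀ i : ℕ, (x i, x (i + 1)) ∈ M.Gr (a i)) ∧
    (∀ ε : ℝ, 0 < ε → ∃ N : ℕ, ∀ n : ℕ, N ≤ n → ∀ u : Fin (n + 1) → M.A,
      M.WordIn u Z → intervalLen (M.Iword u) < ε)

/-- Uniform equicontinuity of the family `{g_u : u ∈ L(C)}`. -/
def UnifEquicontOn (M : MarkovMultiMap) (C : Set M.A) : Prop :=
  ∀ ε : ℝ, 0 < ε → ∃ δ : ℝ, 0 < δ ∧ ∀ n : ℕ, ∀ u : Fin (n + 1) → M.A, M.WordOver u C →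
    ∀ x ∈ M.R (u (Fin.last n)), ∀ y ∈ M.R (u (Fin.last n)),
      |x - y| < δ → |M.gWord u x - M.gWord u y| < ε

end MarkovMultiMap

namespace MarkovMultiMap

variable (M : MarkovMultiMap)

lemma nonemptyA : Nonempty M.A := by
  have h0 : (0 : ℝ) ∈ Set.Icc (0:ℝ) 1 := ⟨le_refl _, zero_le_one⟩
  rw [M.cover] at h0
  rcases Set.mem_iUnion.1 h0 with ⟨a, -⟩
  exact ⟨a⟩

lemma mem_GF_of_Gr {a : M.A} {st : ℝ × ℝ} (h : st ∈ M.Gr a) : st ∈ M.GF :=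
  Set.mem_iUnion.2 ⟨a, h⟩

lemma D_subset_Icc (a : M.A) : M.D a ⊆ Set.Icc (0:ℝ) 1 := by
  rcases M.A_cover a with h | h | h
  · obtain ⟨p, hp, q, hq, hpq, -, hD⟩ := M.D_A0 a h
    rw [hD]
    exact Set.Icc_subset_Icc (M.P_sub hp).1 (M.P_sub hq).2
  · obtain ⟨p, hp, hD⟩ := M.D_A12 a (Set.mem_union_left _ h)
    rw [hD]; exact Set.singleton_subset_iff.2 (M.P_sub hp)
  · obtain ⟨p, hp, hD⟩ := M.D_A12 a (Set.mem_union_right _ h)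
    rw [hD]; exact Set.singleton_subset_iff.2 (M.P_sub hp)

lemma R_subset_Icc (a : M.A) : M.R a ⊆ Set.Icc (0:ℝ) 1 := by
  rcases M.A_cover a with h | h | h
  · obtain ⟨u, hu, v, hv, huv, hR⟩ := M.R_A0 a h
    rw [hR]; exact Set.Icc_subset_Icc (M.P_sub hu).1 (M.P_sub hv).2
  · obtain ⟨u, hu, v, hv, huv, hR, -⟩ := M.R_A1 a h
    rw [hR]; exact Set.Icc_subset_Icc (M.P_sub hu).1 (M.P_sub hv).2
  · obtain ⟨u, hu, hR⟩ := M.R_A2 a h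
    rw [hR]; exact Set.singleton_subset_iff.2 (M.P_sub hu)

lemma D0_subset_D (a : M.A) : M.D0 a ⊆ M.D a := by
  rcases M.A_cover a with h | h | h
  · rw [M.D0_A0 a h]; exact interior_subset
  · rw [M.D0_A12 a (Set.mem_union_left _ h)]
  · rw [M.D0_A12 a (Set.mem_union_right _ h)]

lemma R0_subset_R (a : M.A) : M.R0 a ⊆ M.R a := by
  rcases M.A_cover a with h | h | h
  · rw [M.R0_A01 a (Set.mem_union_left _ h)]; exact interior_subset
  · rw [M.R0_A01 a (Set.mem_union_right _ h)]; exact interior_subset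
  · rw [M.R0_A2 a h]

lemma R_nonempty (a : M.A) : (M.R a).Nonempty := by
  rcases M.A_cover a with h | h | h
  · obtain ⟨u, hu, v, hv, huv, hR⟩ := M.R_A0 a h
    rw [hR]; exact Set.nonempty_Icc.2 huv.le
  · obtain ⟨u, hu, v, hv, huv, hR, -⟩ := M.R_A1 a h
    rw [hR]; exact Set.nonempty_Icc.2 huv.le
  · obtain ⟨u, hu, hR⟩ := M.R_A2 a h
    rw [hR]; exact ⟨u, rfl⟩

lemma D0_nonempty (a : M.A) : (M.D0 a).Nonempty := by
  rcases M.A_cover a with h | h | h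
  · obtain ⟨p, hp, q, hq, hpq, -, hD⟩ := M.D_A0 a h
    rw [M.D0_A0 a h, hD, interior_Icc]
    exact Set.nonempty_Ioo.2 hpq
  · obtain ⟨p, hp, hD⟩ := M.D_A12 a (Set.mem_union_left _ h)
    rw [M.D0_A12 a (Set.mem_union_left _ h), hD]; exact ⟨p, rfl⟩
  · obtain ⟨p, hp, hD⟩ := M.D_A12 a (Set.mem_union_right _ h)
    rw [M.D0_A12 a (Set.mem_union_right _ h), hD]; exact ⟨p, rfl⟩

lemma G0_subset_Gr (a : M.A) : M.G0 a ⊆ M.Gr a := by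
  rcases M.A_cover a with h | h | h
  · rw [M.G0_A0 a h, M.Gr_A0 a h]
    exact fun st hst => ⟨M.D0_subset_D a hst.1, hst.2⟩
  · rw [M.G0_A1 a h, M.Gr_A12 a (Set.mem_union_left _ h)]
    exact Set.prod_mono_right (M.R0_subset_R a)
  · rw [M.G0_A2 a h]

end MarkovMultiMap
namespace MarkovMultiMap

variable (M : MarkovMultiMap)

/-- A continuous bijection of `[p,q]` onto `[u,v]` maps endpoints to endpoints. -/
lemma endpoints_map {f : ℝ → ℝ} {p q u v : ℝ} (hpq : p < q) (huv : u < v)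
    (hc : ContinuousOn f (Set.Icc p q)) (hb : Set.BijOn f (Set.Icc p q) (Set.Icc u v)) :
    ({f p, f q} : Set ℝ) = {u, v} := by
  have hpm : p ∈ Set.Icc p q := Set.left_mem_Icc.2 hpq.le
  have hqm : q ∈ Set.Icc p q := Set.right_mem_Icc.2 hpq.le
  rcases hc.strictMonoOn_of_injOn_Icc' hpq.le hb.injOn with hmono | hanti
  · have hfp : f p = u := by
      refine le_antisymm ?_ (hb.mapsTo hpm).1
      obtain ⟨x, hx, hfx⟩ := hb.surjOn (Set.left_mem_Icc.2 huv.le)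
      rcases eq_or_lt_of_le hx.1 with h | h
      · rw [← h] at hfx; rw [hfx]
      · exact hfx ▸ (hmono hpm hx h).le
    have hfq : f q = v := by
      refine le_antisymm (hb.mapsTo hqm).2 ?_
      obtain ⟨x, hx, hfx⟩ := hb.surjOn (Set.right_mem_Icc.2 huv.le)
      rcases eq_or_lt_of_le hx.2 with h | h
      · rw [h] at hfx; rw [hfx]
      · exact hfx ▸ (hmono hx hqm h).le
    rw [hfp, hfq]
  · have hfp : f p = v := by
      refine le_antisymm (hb.mapsTo hpm).2 ?_
      obtain ⟨x, hx, hfx⟩ := hb.surjOn (Set.right_mem_Icc.2 huv.le)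
      rcases eq_or_lt_of_le hx.1 with h | h
      · rw [← h] at hfx; rw [hfx]
      · exact hfx ▸ (hanti hpm hx h).le
    have hfq : f q = u := by
      refine le_antisymm ?_ (hb.mapsTo hqm).1
      obtain ⟨x, hx, hfx⟩ := hb.surjOn (Set.left_mem_Icc.2 huv.le)
      rcases eq_or_lt_of_le hx.2 with h | h
      · rw [h] at hfx; rw [hfx]
      · exact hfx ▸ (hanti hx hqm h).le
    rw [hfp, hfq, Set.pair_comm]

lemma image_Ioo {f : ℝ → ℝ} {p q u v : ℝ} (hpq : p < q) (huv : u < v)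
    (hc : ContinuousOn f (Set.Icc p q)) (hb : Set.BijOn f (Set.Icc p q) (Set.Icc u v)) :
    f '' Set.Ioo p q = Set.Ioo u v := by
  have hpair : ({p, q} : Set ℝ) ⊆ Set.Icc p q := by
    intro x hx; rcases hx with rfl | rfl
    · exact Set.left_mem_Icc.2 hpq.le
    · exact Set.right_mem_Icc.2 hpq.le
  have h1 : f '' (Set.Icc p q \ {p, q}) = f '' Set.Icc p q \ f '' ({p, q} : Set ℝ) := by
    apply Set.InjOn.image_diff_subset hb.injOn hpair
  have h2 : Set.Icc p q \ {p, q} = Set.Ioo p q := by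
    rw [← Set.Icc_diff_both]
  have h3 : f '' ({p, q} : Set ℝ) = {u, v} := by
    rw [Set.image_pair]
    exact endpoints_map hpq huv hc hb
  rw [← h2, h1, hb.image_eq, h3, Set.Icc_diff_both]

/-- For `a ∈ A₀`, `f a` maps `D0 a` onto `R0 a`. -/
lemma f_image_D0 {a : M.A} (ha : a ∈ M.A0) : M.f a '' M.D0 a = M.R0 a := by
  obtain ⟨p, hp, q, hq, hpq, -, hD⟩ := M.D_A0 a ha
  obtain ⟨u, hu, v, hv, huv, hR⟩ := M.R_A0 a ha
  obtain ⟨hc, hb⟩ := M.f_homeo a ha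
  rw [M.D0_A0 a ha, M.R0_A01 a (Set.mem_union_left _ ha), hD, hR, interior_Icc, interior_Icc]
  rw [hD] at hc
  rw [hD, hR] at hb
  exact image_Ioo hpq huv hc hb

lemma fst_mem_D0 {a : M.A} {s t : ℝ} (h : (s, t) ∈ M.G0 a) : s ∈ M.D0 a := by
  rcases M.A_cover a with ha | ha | ha
  · rw [M.G0_A0 a ha] at h; exact h.1
  · rw [M.G0_A1 a ha] at h
    rw [M.D0_A12 a (Set.mem_union_left _ ha)]; exact h.1
  · rw [M.G0_A2 a ha, M.Gr_A12 a (Set.mem_union_right _ ha)] at h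
    rw [M.D0_A12 a (Set.mem_union_right _ ha)]; exact h.1

lemma snd_mem_R0 {a : M.A} {s t : ℝ} (h : (s, t) ∈ M.G0 a) : t ∈ M.R0 a := by
  rcases M.A_cover a with ha | ha | ha
  · rw [M.G0_A0 a ha] at h
    rw [← M.f_image_D0 ha]
    exact ⟨s, h.1, h.2.symm⟩
  · rw [M.G0_A1 a ha] at h; exact h.2
  · rw [M.G0_A2 a ha, M.Gr_A12 a (Set.mem_union_right _ ha)] at h
    rw [M.R0_A2 a ha]; exact h.2

/-- The key Markov-partition combinatorial lemma. -/
lemma D0_subset_R0 {a b : M.A} {t : ℝ} (ht1 : t ∈ M.R0 a) (ht2 : t ∈ M.D0 b) :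
    M.D0 b ⊆ M.R0 a := by
  rcases M.A_cover b with hb | hb | hb
  · obtain ⟨p, hp, q, hq, hpq, hmid, hD⟩ := M.D_A0 b hb
    have hD0 : M.D0 b = Set.Ioo p q := by rw [M.D0_A0 b hb, hD, interior_Icc]
    rw [hD0] at ht2 ⊢
    have hIoo : ∀ u ∈ M.P, ∀ v ∈ M.P, u < v → M.R a = Set.Icc u v → a ∈ M.A0 ∪ M.A1 →
        Set.Ioo p q ⊆ M.R0 a := by
      intro u hu v hv huv hR ha'
      have hR0 : M.R0 a = Set.Ioo u v := by rw [M.R0_A01 a ha', hR, interior_Icc]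
      rw [hR0] at ht1 ⊢
      have h1 : u ≤ p := by
        by_contra hc; push_neg at hc
        exact hmid u hu ⟨hc, lt_trans ht1.1 ht2.2⟩
      have h2 : q ≤ v := by
        by_contra hc; push_neg at hc
        exact hmid v hv ⟨lt_trans ht2.1 ht1.2, hc⟩
      exact fun x hx => ⟨lt_of_le_of_lt h1 hx.1, lt_of_lt_of_le hx.2 h2⟩
    rcases M.A_cover a with ha | ha | ha
    · obtain ⟨u, hu, v, hv, huv, hR⟩ := M.R_A0 a ha
      exact hIoo u hu v hv huv hR (Set.mem_union_left _ ha)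
    · obtain ⟨u, hu, v, hv, huv, hR, -⟩ := M.R_A1 a ha
      exact hIoo u hu v hv huv hR (Set.mem_union_right _ ha)
    · obtain ⟨u, hu, hR⟩ := M.R_A2 a ha
      have : t = u := by rw [M.R0_A2 a ha, hR] at ht1; exact ht1
      exact absurd (hmid u hu (this ▸ ht2)) (fun h => h)
  · obtain ⟨p, hp, hD⟩ := M.D_A12 b (Set.mem_union_left _ hb)
    have hD0 : M.D0 b = {p} := by rw [M.D0_A12 b (Set.mem_union_left _ hb), hD]
    rw [hD0] at ht2 ⊢
    exact Set.singleton_subset_iff.2 (ht2 ▸ ht1)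
  · obtain ⟨p, hp, hD⟩ := M.D_A12 b (Set.mem_union_right _ hb)
    have hD0 : M.D0 b = {p} := by rw [M.D0_A12 b (Set.mem_union_right _ hb), hD]
    rw [hD0] at ht2 ⊢
    exact Set.singleton_subset_iff.2 (ht2 ▸ ht1)

end MarkovMultiMap
namespace MarkovMultiMap

variable (M : MarkovMultiMap)

lemma Gr_closed (a : M.A) : IsClosed (M.Gr a) := by
  rcases M.A_cover a with ha | ha | ha
  · obtain ⟨p, hp, q, hq, hpq, -, hD⟩ := M.D_A0 a ha
    obtain ⟨hc, hb⟩ := M.f_homeo a ha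
    have himg : M.Gr a = (fun x => (x, M.f a x)) '' M.D a := by
      rw [M.Gr_A0 a ha]
      ext ⟨s, t⟩
      constructor
      · rintro ⟨h1, h2⟩; exact ⟨s, h1, by simp [h2.symm]⟩
      · rintro ⟨x, hx, hxe⟩
        obtain ⟨h1, h2⟩ := Prod.mk.injEq .. ▸ hxe
        exact ⟨h1 ▸ hx, by rw [← h1, h2]⟩
    rw [himg]
    have hcomp : IsCompact (M.D a) := hD ▸ isCompact_Icc
    exact (hcomp.image_of_continuousOn (continuousOn_id.prodMk hc)).isClosed
  · obtain ⟨p, hp, hD⟩ := M.D_A12 a (Set.mem_union_left _ ha)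
    obtain ⟨u, hu, v, hv, huv, hR, -⟩ := M.R_A1 a ha
    rw [M.Gr_A12 a (Set.mem_union_left _ ha), hD, hR]
    exact isClosed_singleton.prod isClosed_Icc
  · obtain ⟨p, hp, hD⟩ := M.D_A12 a (Set.mem_union_right _ ha)
    obtain ⟨u, hu, hR⟩ := M.R_A2 a ha
    rw [M.Gr_A12 a (Set.mem_union_right _ ha), hD, hR]
    exact isClosed_singleton.prod isClosed_singleton

lemma corner_finite (a : M.A) : (M.Gr a \ M.G0 a).Finite := by
  rcases M.A_cover a with ha | ha | ha
  · obtain ⟨p, hp, q, hq, hpq, -, hD⟩ := M.D_A0 a ha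
    apply Set.Finite.subset ((Set.finite_singleton (q, M.f a q)).insert (p, M.f a p))
    rintro ⟨s, t⟩ ⟨hmem, hnot⟩
    rw [M.Gr_A0 a ha] at hmem
    rw [M.G0_A0 a ha] at hnot
    have hval : t = M.f a s := hmem.2
    have hs : s ∉ M.D0 a := fun hc => hnot ⟨hc, hmem.2⟩
    rw [M.D0_A0 a ha, hD, interior_Icc] at hs
    have hIcc : s ∈ Set.Icc p q := hD ▸ hmem.1
    have hor : s = p ∨ s = q := by
      rcases eq_or_lt_of_le hIcc.1 with h | h
      · exact Or.inl h.symm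
      · rcases eq_or_lt_of_le hIcc.2 with h' | h'
        · exact Or.inr h'
        · exact absurd ⟨h, h'⟩ hs
    subst hval
    rcases hor with rfl | rfl
    · exact Or.inl rfl
    · exact Or.inr rfl
  · obtain ⟨p, hp, hD⟩ := M.D_A12 a (Set.mem_union_left _ ha)
    obtain ⟨u, hu, v, hv, huv, hR, -⟩ := M.R_A1 a ha
    apply Set.Finite.subset ((Set.finite_singleton (p, v)).insert (p, u))
    rintro ⟨s, t⟩ ⟨hmem, hnot⟩
    rw [M.Gr_A12 a (Set.mem_union_left _ ha), hD, hR] at hmem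
    rw [M.G0_A1 a ha, hD] at hnot
    have ht : t ∉ M.R0 a := fun hc => hnot ⟨hmem.1, hc⟩
    rw [M.R0_A01 a (Set.mem_union_right _ ha), hR, interior_Icc] at ht
    have hs : s = p := hmem.1
    have hor : t = u ∨ t = v := by
      rcases eq_or_lt_of_le hmem.2.1 with h | h
      · exact Or.inl h.symm
      · rcases eq_or_lt_of_le hmem.2.2 with h' | h'
        · exact Or.inr h'
        · exact absurd ⟨h, h'⟩ ht
    subst hs
    rcases hor with rfl | rfl
    · exact Or.inl rfl
    · exact Or.inr rfl
  · rw [M.G0_A2 a ha]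
    simp

lemma Gr_diff_G0_compl {a : M.A} {st : ℝ × ℝ} (h1 : st ∈ M.Gr a)
    (h2 : st ∉ M.Gr a \ M.G0 a) : st ∈ M.G0 a := by
  by_contra hc
  exact h2 ⟨h1, hc⟩

/-! ### Itineraries -/

noncomputable def label (st : ℝ × ℝ) : M.A :=
  letI : Nonempty M.A := M.nonemptyA
  Classical.epsilon (fun a => st ∈ M.G0 a)

lemma exists_label (hpp : M.ProperlyParametrized) {st : ℝ × ℝ} (h : st ∈ M.GF) :
    ∃ a, st ∈ M.G0 a := by
  rw [← hpp.1] at h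
  exact Set.mem_iUnion.1 h

lemma label_spec (hpp : M.ProperlyParametrized) {st : ℝ × ℝ} (h : st ∈ M.GF) :
    st ∈ M.G0 (M.label st) := by
  have he := M.exists_label hpp h
  letI : Nonempty M.A := M.nonemptyA
  exact Classical.epsilon_spec he

lemma label_unique (hpp : M.ProperlyParametrized) {st : ℝ × ℝ} {a : M.A}
    (h : st ∈ M.G0 a) : M.label st = a := by
  have hGF : st ∈ M.GF := M.mem_GF_of_Gr (M.G0_subset_Gr a h)
  have hs := M.label_spec hpp hGF
  by_contra hne
  exact Set.disjoint_left.1 (hpp.2 _ _ hne) hs h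

noncomputable def itin (x : ↥M.X) (k : ℕ) : M.A := M.label (x.1 k, x.1 (k + 1))

lemma itin_spec (hpp : M.ProperlyParametrized) (x : ↥M.X) (k : ℕ) :
    (x.1 k, x.1 (k + 1)) ∈ M.G0 (M.itin x k) :=
  M.label_spec hpp (x.2.2 k)

lemma itin_unique (hpp : M.ProperlyParametrized) {x : ↥M.X} {k : ℕ} {a : M.A}
    (h : (x.1 k, x.1 (k + 1)) ∈ M.G0 a) : M.itin x k = a :=
  M.label_unique hpp h

lemma itin_mem_SFT (hpp : M.ProperlyParametrized) (x : ↥M.X) :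
    (fun k => M.itin x k) ∈ M.SFT := by
  intro k
  exact M.D0_subset_R0 (M.snd_mem_R0 (M.itin_spec hpp x k))
    (M.fst_mem_D0 (M.itin_spec hpp x (k + 1)))

lemma continuous_shift : Continuous M.shift := by
  apply Continuous.subtype_mk
  exact continuous_pi fun k => (continuous_apply (k + 1)).comp continuous_subtype_val

lemma shift_iterate_coord (x : ↥M.X) (n k : ℕ) :
    ((M.shift)^[n] x).1 k = x.1 (n + k) := by
  induction n generalizing x with
  | zero => simp
  | succ n ih =>
    rw [Function.iterate_succ_apply, ih (M.shift x)]
    show x.1 (n + k + 1) = x.1 (n + 1 + k)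
    rw [show n + 1 + k = n + k + 1 from by omega]

lemma itin_shift (x : ↥M.X) (n k : ℕ) :
    M.itin ((M.shift)^[n] x) k = M.itin x (n + k) := by
  unfold itin
  rw [M.shift_iterate_coord x n k, M.shift_iterate_coord x n (k + 1),
    show n + (k + 1) = n + k + 1 from by omega]

end MarkovMultiMap

/-- Finite closed covers of nonempty open sets contain a somewhere-dense member. -/
lemma list_closed_cover {α : Type*} [TopologicalSpace α] :
    ∀ l : List (Set α), (∀ F ∈ l, IsClosed F) → ∀ O : Set α, IsOpen O → O.Nonempty →
      (∀ x ∈ O, ∃ F ∈ l, x ∈ F) →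
      ∃ F ∈ l, ∃ O' : Set α, IsOpen O' ∧ O'.Nonempty ∧ O' ⊆ O ∩ F := by
  intro l
  induction l with
  | nil =>
    rintro _ O _ ⟨x, hx⟩ hcov
    rcases hcov x hx with ⟨F, hF, -⟩
    simp at hF
  | cons F l ih =>
    intro hcl O hO hne hcov
    by_cases hd : (O \ F).Nonempty
    · have hO' : IsOpen (O \ F) := hO.sdiff (hcl F List.mem_cons_self)
      have hcov' : ∀ x ∈ O \ F, ∃ F' ∈ l, x ∈ F' := by
        intro x hx
        rcases hcov x hx.1 with ⟨F', hF', hxF'⟩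
        rcases List.mem_cons.1 hF' with rfl | h
        · exact absurd hxF' hx.2
        · exact ⟨F', h, hxF'⟩
      obtain ⟨F', hF', O', h1, h2, h3⟩ :=
        ih (fun G hG => hcl G (List.mem_cons_of_mem F hG)) (O \ F) hO' hd hcov'
      exact ⟨F', List.mem_cons_of_mem F hF', O', h1, h2,
        h3.trans (Set.inter_subset_inter_left _ Set.diff_subset)⟩
    · have hsub : O ⊆ F := by
        intro x hx
        by_contra h
        exact hd ⟨x, hx, h⟩
      exact ⟨F, List.mem_cons_self, O, hO, hne, fun x hx => ⟨hx, hsub hx⟩⟩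
namespace MarkovMultiMap

variable (M : MarkovMultiMap)

lemma shrink (hpp : M.ProperlyParametrized) (O : Set ↥M.X) (hO : IsOpen O)
    (hne : O.Nonempty) (j : ℕ) :
    ∃ a : M.A, ∃ O' : Set ↥M.X, IsOpen O' ∧ O'.Nonempty ∧ O' ⊆ O ∧
      ∀ y ∈ O', M.itin y j = a := by
  classical
  haveI := M.finA
  haveI := Fintype.ofFinite M.A
  set π : ↥M.X → ℝ × ℝ := fun y => (y.1 j, y.1 (j + 1)) with hπ
  have hπc : Continuous π :=
    ((continuous_apply j).comp continuous_subtype_val).prodMk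
      ((continuous_apply (j + 1)).comp continuous_subtype_val)
  have hcov1 : ∀ x ∈ O, ∃ F ∈ (Finset.univ : Finset M.A).toList.map
      (fun a => π ⁻¹' (M.Gr a)), x ∈ F := by
    intro x _
    have hGF : π x ∈ M.GF := x.2.2 j
    rcases Set.mem_iUnion.1 hGF with ⟨a, ha⟩
    exact ⟨π ⁻¹' (M.Gr a), List.mem_map.2 ⟨a, Finset.mem_toList.2 (Finset.mem_univ a), rfl⟩, ha⟩
  obtain ⟨F, hF, O₁, hO₁, hne₁, hsub₁⟩ := list_closed_cover _
    (by
      intro F hF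
      rcases List.mem_map.1 hF with ⟨a, -, rfl⟩
      exact (M.Gr_closed a).preimage hπc) O hO hne hcov1
  obtain ⟨a, -, rfl⟩ := List.mem_map.1 hF
  by_cases hex : ∃ y ∈ O₁, π y ∈ M.G0 a
  · obtain ⟨y, hy, hyG⟩ := hex
    have hKfin := M.corner_finite a
    refine ⟨a, O₁ ∩ π ⁻¹' (M.Gr a \ M.G0 a)ᶜ,
      hO₁.inter (hKfin.isClosed.isOpen_compl.preimage hπc),
      ⟨y, hy, fun hc => hc.2 hyG⟩,
      fun x hx => (hsub₁ hx.1).1, ?_⟩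
    intro y' hy'
    have hGr : π y' ∈ M.Gr a := (hsub₁ hy'.1).2
    have hG0 : π y' ∈ M.G0 a := M.Gr_diff_G0_compl hGr hy'.2
    exact M.itin_unique hpp hG0
  · have hKfin := M.corner_finite a
    have hcov2 : ∀ x ∈ O₁, ∃ F ∈ hKfin.toFinset.toList.map (fun κ => π ⁻¹' {κ}), x ∈ F := by
      intro x hx
      have hGr : π x ∈ M.Gr a := (hsub₁ hx).2
      have hK : π x ∈ M.Gr a \ M.G0 a := ⟨hGr, fun hc => hex ⟨x, hx, hc⟩⟩
      exact ⟨π ⁻¹' {π x}, List.mem_map.2 ⟨π x,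
        Finset.mem_toList.2 (hKfin.mem_toFinset.2 hK), rfl⟩, rfl⟩
    obtain ⟨F, hF, O₂, hO₂, hne₂, hsub₂⟩ := list_closed_cover _
      (by
        intro F hF
        rcases List.mem_map.1 hF with ⟨κ, -, rfl⟩
        exact isClosed_singleton.preimage hπc) O₁ hO₁ hne₁ hcov2
    obtain ⟨κ, -, rfl⟩ := List.mem_map.1 hF
    obtain ⟨y₂, hy₂⟩ := hne₂
    have hκGF : κ ∈ M.GF := by
      have : π y₂ = κ := (hsub₂ hy₂).2
      rw [← this]
      exact y₂.2.2 j
    refine ⟨M.label κ, O₂, hO₂, ⟨y₂, hy₂⟩, fun x hx => hsub₁ (hsub₂ hx).1 |>.1, ?_⟩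
    intro y' hy'
    have hπy : π y' = κ := (hsub₂ hy').2
    show M.label (π y') = M.label κ
    rw [hπy]
  
lemma shrink_many (hpp : M.ProperlyParametrized) (O : Set ↥M.X) (hO : IsOpen O)
    (hne : O.Nonempty) (m : ℕ) :
    ∃ O' : Set ↥M.X, IsOpen O' ∧ O'.Nonempty ∧ O' ⊆ O ∧
      ∀ j < m, ∃ a, ∀ y ∈ O', M.itin y j = a := by
  induction m with
  | zero => exact ⟨O, hO, hne, subset_rfl, fun j hj => absurd hj (Nat.not_lt_zero j)⟩
  | succ m ih =>
    obtain ⟨O₁, hO₁, hne₁, hsub₁, hconst₁⟩ := ih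
    obtain ⟨a, O₂, hO₂, hne₂, hsub₂, hconst₂⟩ := M.shrink hpp O₁ hO₁ hne₁ m
    refine ⟨O₂, hO₂, hne₂, hsub₂.trans hsub₁, ?_⟩
    intro j hj
    rcases Nat.lt_succ_iff_lt_or_eq.1 hj with h | rfl
    · obtain ⟨b, hb⟩ := hconst₁ j h
      exact ⟨b, fun y hy => hb y (hsub₂ hy)⟩
    · exact ⟨a, hconst₂⟩

end MarkovMultiMap
namespace MarkovMultiMap

variable (M : MarkovMultiMap)

lemma step_back (a : M.A) {y : ℝ} (hy : y ∈ M.R0 a) :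
    ∃ s, s ∈ M.D0 a ∧ (s, y) ∈ M.G0 a := by
  rcases M.A_cover a with ha | ha | ha
  · rw [← M.f_image_D0 ha] at hy
    obtain ⟨x, hx, rfl⟩ := hy
    refine ⟨x, hx, ?_⟩
    rw [M.G0_A0 a ha]
    exact ⟨hx, rfl⟩
  · obtain ⟨p, hp, hD⟩ := M.D_A12 a (Set.mem_union_left _ ha)
    refine ⟨p, ?_, ?_⟩
    · rw [M.D0_A12 a (Set.mem_union_left _ ha), hD]; rfl
    · rw [M.G0_A1 a ha]
      exact ⟨hD ▸ rfl, hy⟩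
  · obtain ⟨p, hp, hD⟩ := M.D_A12 a (Set.mem_union_right _ ha)
    refine ⟨p, ?_, ?_⟩
    · rw [M.D0_A12 a (Set.mem_union_right _ ha), hD]; rfl
    · rw [M.G0_A2 a ha, M.Gr_A12 a (Set.mem_union_right _ ha)]
      refine ⟨hD ▸ rfl, ?_⟩
      rw [← M.R0_A2 a ha]
      exact hy

lemma exists_succ {y : ℝ} (hy : y ∈ Set.Icc (0:ℝ) 1) :
    ∃ y', y' ∈ Set.Icc (0:ℝ) 1 ∧ (y, y') ∈ M.GF := by
  have h : y ∈ ⋃ a : M.A, M.D a := M.cover ▸ hy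
  rcases Set.mem_iUnion.1 h with ⟨a, hya⟩
  rcases M.A_cover a with ha | ha | ha
  · refine ⟨M.f a y, M.R_subset_Icc a ((M.f_homeo a ha).2.mapsTo hya),
      M.mem_GF_of_Gr (a := a) ?_⟩
    rw [M.Gr_A0 a ha]
    exact ⟨hya, rfl⟩
  · obtain ⟨r, hr⟩ := M.R_nonempty a
    refine ⟨r, M.R_subset_Icc a hr, M.mem_GF_of_Gr (a := a) ?_⟩
    rw [M.Gr_A12 a (Set.mem_union_left _ ha)]
    exact ⟨hya, hr⟩
  · obtain ⟨r, hr⟩ := M.R_nonempty a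
    refine ⟨r, M.R_subset_Icc a hr, M.mem_GF_of_Gr (a := a) ?_⟩
    rw [M.Gr_A12 a (Set.mem_union_right _ ha)]
    exact ⟨hya, hr⟩

lemma chain {z : ℕ → M.A} (hz : z ∈ M.SFT) (m₀ m : ℕ) :
    ∀ i ≤ m, ∃ t : ℕ → ℝ, (∀ i' ≤ i, t i' ∈ M.D0 (z (m₀ + m - i'))) ∧
      ∀ j < i, (t (j + 1), t j) ∈ M.G0 (z (m₀ + m - (j + 1))) := by
  intro i
  induction i with
  | zero =>
    intro _
    refine ⟨fun _ => (M.D0_nonempty (z (m₀ + m))).choose, ?_, fun j hj => absurd hj (by omega)⟩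
    intro i' hi'
    have : i' = 0 := Nat.le_zero.1 hi'
    subst this
    rw [show m₀ + m - 0 = m₀ + m from by omega]
    exact (M.D0_nonempty (z (m₀ + m))).choose_spec
  | succ i ih =>
    intro hi1
    obtain ⟨t, ht1, ht2⟩ := ih (by omega)
    have hti : t i ∈ M.D0 (z (m₀ + m - i)) := ht1 i le_rfl
    have hsft := hz (m₀ + m - (i + 1))
    rw [show m₀ + m - (i + 1) + 1 = m₀ + m - i from by omega] at hsft
    have htR : t i ∈ M.R0 (z (m₀ + m - (i + 1))) := hsft hti
    obtain ⟨s, hs1, hs2⟩ := M.step_back (z (m₀ + m - (i + 1))) htR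
    refine ⟨Function.update t (i + 1) s, ?_, ?_⟩
    · intro i' hi'
      rcases Nat.lt_succ_iff_lt_or_eq.1 (Nat.lt_succ_of_le hi') with h | rfl
      · rw [Function.update_of_ne (by omega)]
        exact ht1 i' (by omega)
      · rw [Function.update_self]
        exact hs1
    · intro j hj
      rcases Nat.lt_succ_iff_lt_or_eq.1 hj with h | rfl
      · rw [Function.update_of_ne (by omega), Function.update_of_ne (by omega)]
        exact ht2 j h
      · rw [Function.update_self, Function.update_of_ne (by omega)]
        exact hs2

lemma exists_special_traj {m : ℕ} {u : Fin m → M.A} (hu : u ∈ M.Lang m) :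
    ∃ x : ↥M.X, ∀ i : Fin m, (x.1 (i : ℕ), x.1 ((i : ℕ) + 1)) ∈ M.G0 (u i) := by
  classical
  obtain ⟨z, hz, m₀, hzu⟩ := hu
  obtain ⟨t, ht1, ht2⟩ := M.chain hz m₀ m m le_rfl
  have ht0Icc : ∀ i' ≤ m, t i' ∈ Set.Icc (0:ℝ) 1 := fun i' hi' =>
    M.D_subset_Icc _ (M.D0_subset_D _ (ht1 i' hi'))
  -- forward tail
  let T : ℕ → {y : ℝ // y ∈ Set.Icc (0:ℝ) 1} := fun n =>
    Nat.rec ⟨t 0, ht0Icc 0 (Nat.zero_le m)⟩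
      (fun _ p => ⟨(M.exists_succ p.2).choose, (M.exists_succ p.2).choose_spec.1⟩) n
  have hTsucc : ∀ n, ((T n).1, (T (n + 1)).1) ∈ M.GF := fun n =>
    (M.exists_succ (T n).2).choose_spec.2
  set xs : ℕ → ℝ := fun k => if k ≤ m then t (m - k) else (T (k - m)).1 with hxs
  have hx1 : ∀ k, xs k ∈ Set.Icc (0:ℝ) 1 := by
    intro k
    by_cases hk : k ≤ m
    · simp only [hxs, if_pos hk]
      exact ht0Icc (m - k) (by omega)
    · simp only [hxs, if_neg hk]
      exact (T (k - m)).2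
  have hGpre : ∀ k, k < m → (xs k, xs (k + 1)) ∈ M.G0 (z (m₀ + k)) := by
    intro k hk
    have h1 : xs k = t (m - k) := by simp only [hxs, if_pos (by omega : k ≤ m)]
    have h2 : xs (k + 1) = t (m - (k + 1)) := by
      simp only [hxs, if_pos (by omega : k + 1 ≤ m)]
    rw [h1, h2]
    have hj : m - (k + 1) < m := by omega
    have := ht2 (m - (k + 1)) hj
    rw [show m - (k + 1) + 1 = m - k from by omega] at this
    rw [show m₀ + m - (m - k) = m₀ + k from by omega] at this
    exact this
  have hx2 : ∀ k, (xs k, xs (k + 1)) ∈ M.GF := by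
    intro k
    by_cases hk1 : k + 1 ≤ m
    · exact M.mem_GF_of_Gr (M.G0_subset_Gr _ (hGpre k (by omega)))
    · by_cases hk : k ≤ m
      · have hkm : k = m := by omega
        subst hkm
        have h1 : xs k = (T 0).1 := by
          have h' : xs k = t (k - k) := by simp only [hxs, if_pos (le_refl k)]
          rw [h', Nat.sub_self]
          rfl
        have h2 : xs (k + 1) = (T 1).1 := by
          have h' : xs (k + 1) = (T (k + 1 - k)).1 := by
            simp only [hxs, if_neg (by omega : ¬ k + 1 ≤ k)]
          rw [h', show k + 1 - k = 1 from by omega]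
        rw [h1, h2]
        exact hTsucc 0
      · have h1 : xs k = (T (k - m)).1 := by simp only [hxs, if_neg hk]
        have h2 : xs (k + 1) = (T (k - m + 1)).1 := by
          simp only [hxs, if_neg (by omega : ¬ k + 1 ≤ m)]
          rw [show k + 1 - m = k - m + 1 from by omega]
        rw [h1, h2]
        exact hTsucc (k - m)
  refine ⟨⟨xs, hx1, hx2⟩, ?_⟩
  intro i
  have := hGpre (i : ℕ) i.2
  rw [← hzu i] at this
  exact this

def StableSym : Set M.A :=
  {c | ∃ O : Set ↥M.X, IsOpen O ∧ O.Nonempty ∧ ∃ k : ℕ, ∀ y ∈ O, M.itin y k = c}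

lemma essential_cyl (_hpp : M.ProperlyParametrized) {m : ℕ} {u : Fin m → M.A}
    (hu : M.EssentialWord u) :
    ∃ O : Set ↥M.X, IsOpen O ∧ O.Nonempty ∧
      ∀ y ∈ O, ∀ i : Fin m, (y.1 (i : ℕ), y.1 ((i : ℕ) + 1)) ∈ M.G0 (u i) := by
  set ρ : ↥M.X → ↥(M.finTraj (m + 1)) := fun x =>
    ⟨fun i => x.1 (i : ℕ), ⟨fun i => x.2.1 (i : ℕ), fun i h => x.2.2 (i : ℕ)⟩⟩ with hρ
  have hρc : Continuous ρ := by
    apply Continuous.subtype_mk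
    apply continuous_pi
    intro i
    exact (continuous_apply ((i : ℕ))).comp continuous_subtype_val
  refine ⟨ρ ⁻¹' {w | M.SpecialLabeled w.1 u}, hu.2.preimage hρc, ?_, ?_⟩
  · obtain ⟨x, hx⟩ := M.exists_special_traj hu.1
    refine ⟨x, ?_⟩
    intro i
    exact hx i
  · intro y hy i
    exact hy i

lemma Ess_subset_Stable (hpp : M.ProperlyParametrized) : M.Ess ⊆ M.StableSym := by
  rintro a ⟨n, u, hu, i, rfl⟩
  obtain ⟨O, hO, hne, hlab⟩ := M.essential_cyl hpp hu
  exact ⟨O, hO, hne, (i : ℕ), fun y hy => M.itin_unique hpp (hlab y hy i)⟩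

end MarkovMultiMap
namespace MarkovMultiMap

variable (M : MarkovMultiMap)

lemma stable_connect (hpp : M.ProperlyParametrized) (hmix : TopMixing M.shift)
    {c c' : M.A} (hc : c ∈ M.StableSym) (hc' : c' ∈ M.StableSym) :
    ∃ N : ℕ, ∀ n : ℕ, N ≤ n → M.WordFromTo M.StableSym c c' n := by
  obtain ⟨O, hO, hOne, k, hk⟩ := hc
  obtain ⟨O', hO', hO'ne, k', hk'⟩ := hc'
  obtain ⟨N₁, hN₁⟩ := hmix O O' hO hO' hOne hO'ne
  refine ⟨N₁ + k + k' + 1, fun nb hnb => ?_⟩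
  set n := nb + k - k' with hn
  have key : n + k' = nb + k := by omega
  obtain ⟨w, ⟨y₀, hy₀O, hy₀e⟩, hy₀'⟩ := hN₁ n (by omega)
  have hy₀pre : y₀ ∈ O ∩ (M.shift^[n]) ⁻¹' O' := ⟨hy₀O, by rw [Set.mem_preimage, hy₀e]; exact hy₀'⟩
  have hO₁open : IsOpen (O ∩ (M.shift^[n]) ⁻¹' O') :=
    hO.inter (hO'.preimage ((M.continuous_shift).iterate n))
  obtain ⟨O₂, hO₂, hO₂ne, hO₂sub, hconst⟩ :=
    M.shrink_many hpp _ hO₁open ⟨y₀, hy₀pre⟩ (n + k' + 1)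
  obtain ⟨y, hy⟩ := hO₂ne
  refine ⟨fun i => M.itin y (k + (i : ℕ)), ⟨⟨fun j => M.itin y j, M.itin_mem_SFT hpp y, k,
    fun i => rfl⟩, ?_⟩, ?_, ?_⟩
  · -- all letters are stable symbols
    intro i
    have hle : k + (i : ℕ) < n + k' + 1 := by
      have := i.2
      omega
    obtain ⟨a, ha⟩ := hconst (k + (i : ℕ)) hle
    have hya : M.itin y (k + (i : ℕ)) = a := ha y hy
    show M.itin y (k + (i : ℕ)) ∈ M.StableSym
    rw [hya]
    exact ⟨O₂, hO₂, ⟨y, hy⟩, k + (i : ℕ), ha⟩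
  · -- first letter
    show M.itin y (k + ((0 : Fin (nb + 1)) : ℕ)) = c
    rw [show ((0 : Fin (nb + 1)) : ℕ) = 0 from rfl, Nat.add_zero]
    exact hk y (hO₂sub hy).1
  · -- last letter
    show M.itin y (k + ((Fin.last nb : Fin (nb + 1)) : ℕ)) = c'
    rw [Fin.val_last, show k + nb = n + k' from by omega, ← M.itin_shift y n k']
    exact hk' _ ((hO₂sub hy).2)

lemma stable_mixing (hpp : M.ProperlyParametrized) (hmix : TopMixing M.shift) :
    M.MixingSet M.StableSym := by
  classical
  haveI := M.finA
  haveI := Fintype.ofFinite M.A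
  have h : ∀ c c' : M.A, ∃ N : ℕ, c ∈ M.StableSym → c' ∈ M.StableSym →
      ∀ n : ℕ, N ≤ n → M.WordFromTo M.StableSym c c' n := by
    intro c c'
    by_cases hcc : c ∈ M.StableSym ∧ c' ∈ M.StableSym
    · obtain ⟨N, hN⟩ := M.stable_connect hpp hmix hcc.1 hcc.2
      exact ⟨N, fun _ _ => hN⟩
    · exact ⟨0, fun h1 h2 => absurd ⟨h1, h2⟩ hcc⟩
  choose Nf hNf using h
  set Ng : ℕ := Finset.univ.sup (fun c : M.A => Finset.univ.sup (fun c' : M.A => Nf c c'))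
  refine ⟨Ng + 1, by omega, ?_⟩
  intro a ha b hb n hn
  have hle : Nf a b ≤ Ng := by
    refine le_trans (Finset.le_sup (f := fun c' => Nf a c') (Finset.mem_univ b)) ?_
    exact Finset.le_sup (f := fun c => Finset.univ.sup (fun c' => Nf c c')) (Finset.mem_univ a)
  exact hNf a b ha hb n (by omega)

end MarkovMultiMap
/-- If the forward trajectory system `(X,T)` of a properly parametrized Markov
multi-map is topologically mixing, then `Σ_M` satisfies the Mixing Condition (MC). -/
theorem stmt2 (M : MarkovMultiMap) (hpp : M.ProperlyParametrized)
    (hmix : TopMixing M.shift) : M.MC := by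
  classical
  haveI := M.finA
  have hCmix : M.MixingSet M.StableSym := M.stable_mixing hpp hmix
  have hEss : M.Ess ⊆ M.StableSym := M.Ess_subset_Stable hpp
  -- extend to a maximal mixing set
  set S : Set (Set M.A) := {C' | M.MixingSet C' ∧ M.StableSym ⊆ C'} with hS
  have hSne : S.Nonempty := ⟨M.StableSym, hCmix, subset_rfl⟩
  obtain ⟨Cm, hCm, hmax⟩ := Set.Finite.exists_maximalFor id S (Set.toFinite S) hSne
  refine ⟨Cm, ⟨hCm.1, ?_⟩, hEss.trans hCm.2⟩
  intro C' hC' hsub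
  exact le_antisymm (hmax ⟨hC', hCm.2.trans hsub⟩ hsub) hsub
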